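/- For n ≥ 3, let H_n be the graph with vertex set Y_{2n} ∪ {x, x'} ∪ Z_n, where Y_{2n} = {y_1,…,y_{2n}} induces a complete graph K_{2n}, the set {x,x'} ∪ Z_n with Z_n = {z_1,…,z_n} induces a complete bipartite graph K_{2,n} with parts {x,x'} and Z_n, the vertex x is additionally adjacent to y_1,…,y_n, and x' is additionally adjacent to y_{n+1}. Then gp(H_n) = 2n + 1 and gp(H_n − x) = 3n − 1. -/

import Mathlib

open SimpleGraph

/-- `S` is a *general position set* of `G`: no three distinct vertices of `S`
lie on a common shortest path (geodesic) of `G`. -/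
def IsGPSet {V : Type*} (G : SimpleGraph V) (S : Set V) : Prop :=
  ∀ ⦃u v w : V⦄, u ∈ S → v ∈ S → w ∈ S → u ≠ v → u ≠ w → v ≠ w →
    ∀ p : G.Walk u v, p.IsPath → p.length = G.dist u v → w ∉ p.support

/-- The *general position number* of `G`: the maximum cardinality of a
general position set. -/
noncomputable def gpNum {V : Type*} [Fintype V] (G : SimpleGraph V) : ℕ :=
  sSup {n : ℕ | ∃ S : Finset V, IsGPSet G ↑S ∧ S.card = n}

/-- The vertex-deleted subgraph `G - x`, induced on `V(G) \ {x}`. -/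
def delVert {V : Type*} (G : SimpleGraph V) (x : V) : SimpleGraph {y : V // y ≠ x} :=
  G.comap Subtype.val

/-- The graph `H_n`: vertices are `Sum.inl i` for `i : Fin (2n)` (the clique
`Y_{2n}`, with `y_j` corresponding to `i = j - 1`), `Sum.inr (Sum.inl false) = x`,
`Sum.inr (Sum.inl true) = x'`, and `Sum.inr (Sum.inr j)` for `j : Fin n`
(the set `Z_n`).  `Y_{2n}` induces `K_{2n}`; `{x, x'} ∪ Z_n` induces `K_{2,n}`
with parts `{x, x'}` and `Z_n`; `x` is adjacent to `y_1, …, y_n`; and `x'` is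
adjacent to `y_{n+1}`. -/
def Hgraph (n : ℕ) : SimpleGraph (Fin (2 * n) ⊕ (Bool ⊕ Fin n)) :=
  SimpleGraph.fromRel (fun a b =>
    match a, b with
    | Sum.inl _, Sum.inl _ => True
    | Sum.inr (Sum.inl _), Sum.inr (Sum.inr _) => True
    | Sum.inr (Sum.inl false), Sum.inl i => (i : ℕ) < n
    | Sum.inr (Sum.inl true), Sum.inl i => (i : ℕ) = n
    | _, _ => False)


open Walk

section helpers
variable {V : Type*} {G : SimpleGraph V} {u v w : V}

lemma gp_swap (h : ∀ p : G.Walk u v, p.IsPath → p.length = G.dist u v → w ∉ p.support) :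
    ∀ p : G.Walk v u, p.IsPath → p.length = G.dist v u → w ∉ p.support := by
  intro p hp hl hw
  exact h p.reverse hp.reverse (by simpa [dist_comm] using hl) (by simpa using hw)

lemma dist_eq_two' (h1 : u ≠ v) (h2 : ¬ G.Adj u v) (m : V) (h3 : G.Adj u m) (h4 : G.Adj m v) :
    G.dist u v = 2 := by
  have hle : G.dist u v ≤ 2 := by
    simpa using dist_le (Walk.cons h3 (Walk.cons h4 Walk.nil))
  have hr : G.Reachable u v := ⟨Walk.cons h3 (Walk.cons h4 Walk.nil)⟩
  have h0 : G.dist u v ≠ 0 := by simp [hr, h1]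
  have hone : G.dist u v ≠ 1 := by simpa [dist_eq_one_iff_adj] using h2
  omega

lemma walk_nil_of_len0 {p : G.Walk u v} (h : p.length = 0) :
    ∃ (_ : u = v), p.support = [u] := by
  cases p with
  | nil => exact ⟨rfl, rfl⟩
  | cons ha q => simp at h

lemma walk_len1_support (p : G.Walk u v) (h : p.length = 1) :
    G.Adj u v ∧ p.support = [u, v] := by
  cases p with
  | nil => simp at h
  | cons ha q =>
    simp at h
    obtain ⟨he, hs⟩ := walk_nil_of_len0 (p := q) (by simpa using h)
    subst he
    exact ⟨ha, by simp [hs]⟩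

lemma walk_len2_support (p : G.Walk u v) (h : p.length = 2) :
    ∃ m, G.Adj u m ∧ G.Adj m v ∧ p.support = [u, m, v] := by
  cases p with
  | nil => simp at h
  | cons ha q =>
    simp at h
    obtain ⟨hadj, hs⟩ := walk_len1_support q h
    exact ⟨_, ha, hadj, by simp [hs]⟩

lemma walk_len3_support (p : G.Walk u v) (h : p.length = 3) :
    ∃ m m', G.Adj u m ∧ G.Adj m m' ∧ G.Adj m' v ∧ p.support = [u, m, m', v] := by
  cases p with
  | nil => simp at h
  | cons ha q =>
    simp at h
    obtain ⟨m, h1, h2, hs⟩ := walk_len2_support q h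
    exact ⟨_, m, ha, h1, h2, by simp [hs]⟩

lemma dist_eq_three' (h1 : u ≠ v) (h2 : ¬ G.Adj u v)
    (h3 : ∀ m, G.Adj u m → ¬ G.Adj m v) (p : G.Walk u v) (hp : p.length = 3) :
    G.dist u v = 3 := by
  have hle : G.dist u v ≤ 3 := hp ▸ dist_le p
  have hr : G.Reachable u v := ⟨p⟩
  have h0 : G.dist u v ≠ 0 := by simp [hr, h1]
  have hone : G.dist u v ≠ 1 := by simpa [dist_eq_one_iff_adj] using h2
  have htwo : G.dist u v ≠ 2 := by
    intro hd
    obtain ⟨q, hq⟩ := hr.exists_walk_length_eq_dist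
    rw [hd] at hq
    obtain ⟨m, ha, hb, -⟩ := walk_len2_support q hq
    exact h3 m ha hb
  omega
end helpers


lemma gpNum_eq {V : Type*} [Fintype V] (G : SimpleGraph V) (k : ℕ) (S : Finset V)
    (hS : IsGPSet G ↑S) (hcard : S.card = k)
    (hub : ∀ T : Finset V, IsGPSet G ↑T → T.card ≤ k) : gpNum G = k :=
  IsGreatest.csSup_eq ⟨⟨S, hS, hcard⟩, by rintro m ⟨T, hT, rfl⟩; exact hub T hT⟩


namespace HG
variable {n : ℕ}

abbrev yv (i : Fin (2*n)) : Fin (2*n) ⊕ (Bool ⊕ Fin n) := Sum.inl i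
abbrev xv (n : ℕ) : Fin (2*n) ⊕ (Bool ⊕ Fin n) := Sum.inr (Sum.inl false)
abbrev xv' (n : ℕ) : Fin (2*n) ⊕ (Bool ⊕ Fin n) := Sum.inr (Sum.inl true)
abbrev zv (j : Fin n) : Fin (2*n) ⊕ (Bool ⊕ Fin n) := Sum.inr (Sum.inr j)

lemma adj_yy {i j : Fin (2*n)} : (Hgraph n).Adj (yv i) (yv j) ↔ i ≠ j := by simp [Hgraph]
lemma adj_zx (j : Fin n) : (Hgraph n).Adj (zv j) (xv n) := by simp [Hgraph]
lemma adj_zx' (j : Fin n) : (Hgraph n).Adj (zv j) (xv' n) := by simp [Hgraph]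
lemma adj_xy {i : Fin (2*n)} : (Hgraph n).Adj (xv n) (yv i) ↔ (i : ℕ) < n := by simp [Hgraph]
lemma adj_x'y {i : Fin (2*n)} : (Hgraph n).Adj (xv' n) (yv i) ↔ (i : ℕ) = n := by simp [Hgraph]

lemma z_nbr {j : Fin n} {v} (h : (Hgraph n).Adj (zv j) v) : v = xv n ∨ v = xv' n := by
  rcases v with i | b | k
  · simp [Hgraph] at h
  · rcases b with _|_ <;> simp
  · simp [Hgraph] at h

lemma z_nbr' {j : Fin n} {v} (h : (Hgraph n).Adj v (zv j)) : v = xv n ∨ v = xv' n :=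
  z_nbr h.symm

lemma not_adj_yz {i : Fin (2*n)} {j : Fin n} : ¬ (Hgraph n).Adj (yv i) (zv j) := by
  simp [Hgraph]

lemma not_adj_zz {j k : Fin n} : ¬ (Hgraph n).Adj (zv j) (zv k) := by simp [Hgraph]

-- distances
lemma distH_zz {j j' : Fin n} (h : j ≠ j') : (Hgraph n).dist (zv j) (zv j') = 2 :=
  dist_eq_two' (by simp [h]) not_adj_zz (xv n) (adj_zx j) (adj_zx j').symm

lemma distH_zy3 {j : Fin n} {i : Fin (2*n)} (hi : n < (i : ℕ)) (hn : 0 < n) :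
    (Hgraph n).dist (zv j) (yv i) = 3 := by
  have h0n : (0 : ℕ) < 2*n := by omega
  refine dist_eq_three' (by simp) (by simp [Hgraph]) ?_
    (Walk.cons (adj_zx j) (Walk.cons (adj_xy.2 (by simp [hn] : ((⟨0, h0n⟩ : Fin (2*n)) : ℕ) < n))
      (Walk.cons (adj_yy.2 (by simp [Fin.ext_iff]; omega)) Walk.nil))) (by simp)
  intro m hm hmv
  rcases z_nbr hm with rfl | rfl
  · rw [adj_xy] at hmv; omega
  · rw [adj_x'y] at hmv; omega

lemma distH_xy2 {i : Fin (2*n)} (hi : n ≤ (i : ℕ)) (hn : 0 < n) :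
    (Hgraph n).dist (xv n) (yv i) = 2 := by
  have h0n : (0 : ℕ) < 2*n := by omega
  exact dist_eq_two' (by simp) (by simp [Hgraph]; omega)
    (yv ⟨0, h0n⟩) (adj_xy.2 (by simpa)) (adj_yy.2 (by simp [Fin.ext_iff]; omega))


variable {S : Finset (Fin (2*n) ⊕ (Bool ⊕ Fin n))}

lemma violZZ (hS : IsGPSet (Hgraph n) ↑S) {j j' : Fin n} (hjj : j ≠ j')
    (hj : zv j ∈ S) (hj' : zv j' ∈ S) : xv n ∉ S ∧ xv' n ∉ S := by
  constructor <;> intro hx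
  · exact hS (Finset.mem_coe.2 hj) (Finset.mem_coe.2 hj') (Finset.mem_coe.2 hx)
      (by simp [hjj]) (by simp) (by simp)
      (Walk.cons (adj_zx j) (Walk.cons (adj_zx j').symm Walk.nil))
      (by rw [Walk.isPath_def]; simp [hjj])
      (by simp [distH_zz hjj]) (by simp)
  · exact hS (Finset.mem_coe.2 hj) (Finset.mem_coe.2 hj') (Finset.mem_coe.2 hx)
      (by simp [hjj]) (by simp) (by simp)
      (Walk.cons (adj_zx' j) (Walk.cons (adj_zx' j').symm Walk.nil))
      (by rw [Walk.isPath_def]; simp [hjj])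
      (by simp [distH_zz hjj]) (by simp)

lemma violZY (hS : IsGPSet (Hgraph n) ↑S) {j : Fin n} {i : Fin (2*n)}
    (hjS : zv j ∈ S) (hi : n < (i : ℕ)) (hiS : yv i ∈ S) (hn : 0 < n) :
    (∀ k : Fin (2*n), (k : ℕ) ≤ n → yv k ∉ S) ∧ xv n ∉ S ∧ xv' n ∉ S := by
  have h0n : (0:ℕ) < 2*n := by omega
  have hd := distH_zy3 (j := j) hi hn
  refine ⟨?_, ?_, ?_⟩
  · intro k hk hkS
    rcases lt_or_eq_of_le hk with hk | hk
    · exact hS (Finset.mem_coe.2 hjS) (Finset.mem_coe.2 hiS) (Finset.mem_coe.2 hkS)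
        (by simp) (by simp) (by simp [Fin.ext_iff]; omega)
        (Walk.cons (adj_zx j) (Walk.cons (adj_xy.2 hk)
          (Walk.cons (adj_yy.2 (by simp [Fin.ext_iff]; omega)) Walk.nil)))
        (by rw [Walk.isPath_def]; simp [Fin.ext_iff]; omega)
        (by simp [hd]) (by simp)
    · exact hS (Finset.mem_coe.2 hjS) (Finset.mem_coe.2 hiS) (Finset.mem_coe.2 hkS)
        (by simp) (by simp) (by simp [Fin.ext_iff]; omega)
        (Walk.cons (adj_zx' j) (Walk.cons (adj_x'y.2 hk)
          (Walk.cons (adj_yy.2 (by simp [Fin.ext_iff]; omega)) Walk.nil)))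
        (by rw [Walk.isPath_def]; simp [Fin.ext_iff]; omega)
        (by simp [hd]) (by simp)
  · intro hx
    exact hS (Finset.mem_coe.2 hjS) (Finset.mem_coe.2 hiS) (Finset.mem_coe.2 hx)
      (by simp) (by simp) (by simp)
      (Walk.cons (adj_zx j) (Walk.cons (adj_xy.2 (by simp [hn] : ((⟨0,h0n⟩ : Fin (2*n)):ℕ) < n))
        (Walk.cons (adj_yy.2 (by simp [Fin.ext_iff]; omega)) Walk.nil)))
      (by rw [Walk.isPath_def]; simp [Fin.ext_iff]; omega)
      (by simp [hd]) (by simp)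
  · intro hx
    exact hS (Finset.mem_coe.2 hjS) (Finset.mem_coe.2 hiS) (Finset.mem_coe.2 hx)
      (by simp) (by simp) (by simp)
      (Walk.cons (adj_zx' j) (Walk.cons (adj_x'y.2 (by simp : ((⟨n, by omega⟩ : Fin (2*n)):ℕ) = n))
        (Walk.cons (adj_yy.2 (by simp [Fin.ext_iff]; omega)) Walk.nil)))
      (by rw [Walk.isPath_def]; simp [Fin.ext_iff]; omega)
      (by simp [hd]) (by simp)

lemma violXY (hS : IsGPSet (Hgraph n) ↑S) {i : Fin (2*n)}
    (hx : xv n ∈ S) (hi : n ≤ (i : ℕ)) (hiS : yv i ∈ S) :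
    ∀ k : Fin (2*n), (k : ℕ) < n → yv k ∉ S := by
  intro k hk hkS
  have hn : 0 < n := by omega
  exact hS (Finset.mem_coe.2 hx) (Finset.mem_coe.2 hiS) (Finset.mem_coe.2 hkS)
    (by simp) (by simp) (by simp [Fin.ext_iff]; omega)
    (Walk.cons (adj_xy.2 hk) (Walk.cons (adj_yy.2 (by simp [Fin.ext_iff]; omega)) Walk.nil))
    (by rw [Walk.isPath_def]; simp [Fin.ext_iff]; omega)
    (by simp [distH_xy2 hi hn]) (by simp)



/-- the upper bound for `gp(H_n)` -/
lemma ubH (hn : 3 ≤ n) (S : Finset (Fin (2*n) ⊕ (Bool ⊕ Fin n)))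
    (hS : IsGPSet (Hgraph n) ↑S) : S.card ≤ 2*n + 1 := by
  classical
  have hn0 : 0 < n := by omega
  set yn : Fin (2*n) := ⟨n, by omega⟩ with hyn
  have hynv : (yn : ℕ) = n := rfl
  have cIic : (Finset.Iic yn).card = n + 1 := by rw [Fin.card_Iic]
  have cIoi : (Finset.Ioi yn).card = n - 1 := by rw [Fin.card_Ioi]; omega
  have cIci : (Finset.Ici yn).card = n := by rw [Fin.card_Ici]; omega
  have cIio : (Finset.Iio yn).card = n := by rw [Fin.card_Iio]
  have cZ : ((Finset.univ : Finset (Fin n)).image (fun j : Fin n => zv j)).card ≤ n := by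
    simpa using Finset.card_image_le (s := (Finset.univ : Finset (Fin n)))
      (f := fun j : Fin n => zv j)
  have cPair : ({xv n, xv' n} : Finset (Fin (2*n) ⊕ (Bool ⊕ Fin n))).card ≤ 2 :=
    (Finset.card_insert_le _ _).trans (by simp)
  by_cases hC : ∃ (j : Fin n) (i : Fin (2*n)), zv j ∈ S ∧ n < (i:ℕ) ∧ yv i ∈ S
  · obtain ⟨j, i, hj, hi, hy⟩ := hC
    obtain ⟨hAB, hx, hx'⟩ := violZY hS hj hi hy hn0
    have hsub : S ⊆ (Finset.univ.image (fun j : Fin n => zv j)) ∪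
        ((Finset.Ioi yn).image Sum.inl) := by
      intro v hv
      rcases v with k | b | m
      · rcases le_or_gt (k:ℕ) n with h | h
        · exact absurd hv (hAB k h)
        · simp only [Finset.mem_union, Finset.mem_image, Finset.mem_Ioi]
          exact Or.inr ⟨k, by simp [Fin.lt_def, hynv, h], rfl⟩
      · rcases b with _ | _
        · exact absurd hv hx
        · exact absurd hv hx'
      · simp
    have h1 := Finset.card_le_card hsub
    have h2 := Finset.card_union_le (Finset.univ.image (fun j : Fin n => zv j))
      ((Finset.Ioi yn).image Sum.inl)
    have h3 := Finset.card_image_le (s := Finset.Ioi yn) (f := (Sum.inl : Fin (2*n) → Fin (2*n) ⊕ (Bool ⊕ Fin n)))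
    omega
  · push_neg at hC
    by_cases hZ2 : ∃ j j' : Fin n, j ≠ j' ∧ zv j ∈ S ∧ zv j' ∈ S
    · obtain ⟨j, j', hjj, hj, hj'⟩ := hZ2
      obtain ⟨hx, hx'⟩ := violZZ hS hjj hj hj'
      have hsub : S ⊆ (Finset.univ.image (fun j : Fin n => zv j)) ∪
          ((Finset.Iic yn).image Sum.inl) := by
        intro v hv
        rcases v with k | b | m
        · rcases le_or_gt (k:ℕ) n with h | h
          · simp only [Finset.mem_union, Finset.mem_image, Finset.mem_Iic]
            exact Or.inr ⟨k, by simp [Fin.le_def, hynv, h], rfl⟩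
          · exact absurd hv (hC j k hj h)
        · rcases b with _ | _
          · exact absurd hv hx
          · exact absurd hv hx'
        · simp
      have h1 := Finset.card_le_card hsub
      have h2 := Finset.card_union_le (Finset.univ.image (fun j : Fin n => zv j))
        ((Finset.Iic yn).image Sum.inl)
      have h3 := Finset.card_image_le (s := Finset.Iic yn) (f := (Sum.inl : Fin (2*n) → Fin (2*n) ⊕ (Bool ⊕ Fin n)))
      omega
    · push_neg at hZ2
      by_cases hZ1 : ∃ j : Fin n, zv j ∈ S
      · obtain ⟨j0, hj0⟩ := hZ1
        have hsplit := Finset.card_filter_add_card_filter_not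
          (s := S) (p := fun v => ∃ j : Fin n, v = zv j)
        have hz1 : (S.filter (fun v => ∃ j : Fin n, v = zv j)).card ≤ 1 := by
          refine Finset.card_le_one.2 ?_
          rintro a ha b hb
          obtain ⟨haS, ja, rfl⟩ := Finset.mem_filter.1 ha
          obtain ⟨hbS, jb, rfl⟩ := Finset.mem_filter.1 hb
          by_contra hne
          exact (hZ2 ja jb (by simpa using hne) haS) hbS
        have hrest : (S.filter (fun v => ¬ ∃ j : Fin n, v = zv j)) ⊆
            ({xv n, xv' n} : Finset (Fin (2*n) ⊕ (Bool ⊕ Fin n))) ∪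
            ((Finset.Iic yn).image Sum.inl) := by
          intro v hv
          obtain ⟨hvS, hnz⟩ := Finset.mem_filter.1 hv
          rcases v with k | b | m
          · rcases le_or_gt (k:ℕ) n with h | h
            · simp only [Finset.mem_union, Finset.mem_image, Finset.mem_Iic]
              exact Or.inr ⟨k, by simp [Fin.le_def, hynv, h], rfl⟩
            · exact absurd hvS (hC j0 k hj0 h)
          · rcases b with _ | _ <;> simp
          · exact absurd ⟨m, rfl⟩ hnz
        have h1 := Finset.card_le_card hrest
        have h2 := Finset.card_union_le
          ({xv n, xv' n} : Finset (Fin (2*n) ⊕ (Bool ⊕ Fin n)))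
          ((Finset.Iic yn).image Sum.inl)
        have h3 := Finset.card_image_le (s := Finset.Iic yn) (f := (Sum.inl : Fin (2*n) → Fin (2*n) ⊕ (Bool ⊕ Fin n)))
        omega
      · push_neg at hZ1
        by_cases hx : xv n ∈ S
        · by_cases hU : ∃ i : Fin (2*n), n ≤ (i:ℕ) ∧ yv i ∈ S
          · obtain ⟨i, hi, hy⟩ := hU
            have hA := violXY hS hx hi hy
            have hsub : S ⊆ ({xv n, xv' n} : Finset (Fin (2*n) ⊕ (Bool ⊕ Fin n))) ∪
                ((Finset.Ici yn).image Sum.inl) := by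
              intro v hv
              rcases v with k | b | m
              · rcases lt_or_ge (k:ℕ) n with h | h
                · exact absurd hv (hA k h)
                · simp only [Finset.mem_union, Finset.mem_image, Finset.mem_Ici]
                  exact Or.inr ⟨k, by simp [Fin.le_def, hynv, h], rfl⟩
              · rcases b with _ | _ <;> simp
              · exact absurd hv (hZ1 m)
            have h1 := Finset.card_le_card hsub
            have h2 := Finset.card_union_le
              ({xv n, xv' n} : Finset (Fin (2*n) ⊕ (Bool ⊕ Fin n)))
              ((Finset.Ici yn).image Sum.inl)
            have h3 := Finset.card_image_le (s := Finset.Ici yn) (f := (Sum.inl : Fin (2*n) → Fin (2*n) ⊕ (Bool ⊕ Fin n)))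
            omega
          · push_neg at hU
            have hsub : S ⊆ ({xv n, xv' n} : Finset (Fin (2*n) ⊕ (Bool ⊕ Fin n))) ∪
                ((Finset.Iio yn).image Sum.inl) := by
              intro v hv
              rcases v with k | b | m
              · rcases lt_or_ge (k:ℕ) n with h | h
                · simp only [Finset.mem_union, Finset.mem_image, Finset.mem_Iio]
                  exact Or.inr ⟨k, by simp [Fin.lt_def, hynv, h], rfl⟩
                · exact absurd hv (hU k h)
              · rcases b with _ | _ <;> simp
              · exact absurd hv (hZ1 m)
            have h1 := Finset.card_le_card hsub
            have h2 := Finset.card_union_le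
              ({xv n, xv' n} : Finset (Fin (2*n) ⊕ (Bool ⊕ Fin n)))
              ((Finset.Iio yn).image Sum.inl)
            have h3 := Finset.card_image_le (s := Finset.Iio yn) (f := (Sum.inl : Fin (2*n) → Fin (2*n) ⊕ (Bool ⊕ Fin n)))
            omega
        · have hsub : S ⊆ ({xv' n} : Finset (Fin (2*n) ⊕ (Bool ⊕ Fin n))) ∪
              (Finset.univ.image (Sum.inl : Fin (2*n) → Fin (2*n) ⊕ (Bool ⊕ Fin n))) := by
            intro v hv
            rcases v with k | b | m
            · simp
            · rcases b with _ | _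
              · exact absurd hv hx
              · simp
            · exact absurd hv (hZ1 m)
          have h1 := Finset.card_le_card hsub
          have h2 := Finset.card_union_le
            ({xv' n} : Finset (Fin (2*n) ⊕ (Bool ⊕ Fin n)))
            (Finset.univ.image (Sum.inl : Fin (2*n) → Fin (2*n) ⊕ (Bool ⊕ Fin n)))
          have h3 := Finset.card_image_le (s := (Finset.univ : Finset (Fin (2*n))))
            (f := (Sum.inl : Fin (2*n) → Fin (2*n) ⊕ (Bool ⊕ Fin n)))
          simp only [Finset.card_univ, Fintype.card_fin, Finset.card_singleton] at h3 h2 ⊢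
          omega


lemma card_le_n (hn : 0 < n) :
    ((Finset.univ.filter (fun i : Fin (2*n) => (i:ℕ) ≤ n)).card = n + 1) := by
  have h : (Finset.univ.filter (fun i : Fin (2*n) => (i:ℕ) ≤ n)) =
      Finset.Iic (⟨n, by omega⟩ : Fin (2*n)) := by
    ext i; simp [Fin.le_def]
  rw [h, Fin.card_Iic]

/-- The general position set of size `2n+1` in `H_n`: `Z ∪ {y_i : i ≤ n}`. -/
def S1 (n : ℕ) : Finset (Fin (2*n) ⊕ (Bool ⊕ Fin n)) :=
  ((Finset.univ.filter (fun i : Fin (2*n) => (i:ℕ) ≤ n)).image Sum.inl) ∪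
    (Finset.univ.image (fun j : Fin n => zv j))

lemma mem_S1 {v} : v ∈ S1 n ↔
    (∃ i : Fin (2*n), (i:ℕ) ≤ n ∧ v = yv i) ∨ ∃ j : Fin n, v = zv j := by
  simp [S1, eq_comm]

lemma card_S1 (hn : 0 < n) : (S1 n).card = 2*n + 1 := by
  rw [S1, Finset.card_union_of_disjoint, Finset.card_image_of_injective _ Sum.inl_injective,
    Finset.card_image_of_injective, card_le_n hn, Finset.card_univ, Fintype.card_fin]
  · omega
  · intro a b hab
    simpa using hab
  · rw [Finset.disjoint_left]
    rintro a ha hb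
    simp only [Finset.mem_image] at ha hb
    obtain ⟨i, -, rfl⟩ := ha
    obtain ⟨j, -, h⟩ := hb
    exact absurd h (by simp)

lemma core_yy {i i' : Fin (2*n)} {w} (hne : i ≠ i') (hw1 : w ≠ yv i) (hw2 : w ≠ yv i') :
    ∀ p : (Hgraph n).Walk (yv i) (yv i'), p.IsPath →
      p.length = (Hgraph n).dist (yv i) (yv i') → w ∉ p.support := by
  intro p hp hl hw
  have hd : (Hgraph n).dist (yv i) (yv i') = 1 := dist_eq_one_iff_adj.2 (adj_yy.2 hne)
  rw [hd] at hl
  obtain ⟨-, hs⟩ := walk_len1_support p hl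
  rw [hs] at hw
  simp only [List.mem_cons, List.not_mem_nil, or_false, List.mem_singleton] at hw
  tauto

lemma core_yz {i : Fin (2*n)} {j : Fin n} {w} (hi : (i:ℕ) ≤ n)
    (hw1 : w ≠ xv n) (hw2 : w ≠ xv' n) (hw3 : w ≠ yv i) (hw4 : w ≠ zv j) :
    ∀ p : (Hgraph n).Walk (yv i) (zv j), p.IsPath →
      p.length = (Hgraph n).dist (yv i) (zv j) → w ∉ p.support := by
  intro p hp hl hw
  have hd : (Hgraph n).dist (yv i) (zv j) = 2 := by
    rcases lt_or_eq_of_le hi with h | h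
    · exact dist_eq_two' (by simp) not_adj_yz (xv n) (adj_xy.2 h).symm (adj_zx j).symm
    · exact dist_eq_two' (by simp) not_adj_yz (xv' n) (adj_x'y.2 h).symm (adj_zx' j).symm
  rw [hd] at hl
  obtain ⟨m, h1, h2, hs⟩ := walk_len2_support p hl
  rw [hs] at hw
  simp only [List.mem_cons, List.not_mem_nil, or_false, List.mem_singleton] at hw
  rcases hw with rfl | rfl | rfl
  · exact hw3 rfl
  · rcases z_nbr' h2 with rfl | rfl
    · exact hw1 rfl
    · exact hw2 rfl
  · exact hw4 rfl

lemma core_zz {j j' : Fin n} {w} (hne : j ≠ j')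
    (hw1 : w ≠ xv n) (hw2 : w ≠ xv' n) (hw3 : w ≠ zv j) (hw4 : w ≠ zv j') :
    ∀ p : (Hgraph n).Walk (zv j) (zv j'), p.IsPath →
      p.length = (Hgraph n).dist (zv j) (zv j') → w ∉ p.support := by
  intro p hp hl hw
  rw [distH_zz hne] at hl
  obtain ⟨m, h1, h2, hs⟩ := walk_len2_support p hl
  rw [hs] at hw
  simp only [List.mem_cons, List.not_mem_nil, or_false, List.mem_singleton] at hw
  rcases hw with rfl | rfl | rfl
  · exact hw3 rfl
  · rcases z_nbr h1 with rfl | rfl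
    · exact hw1 rfl
    · exact hw2 rfl
  · exact hw4 rfl

lemma gpset_S1 : IsGPSet (Hgraph n) ↑(S1 n) := by
  intro u v w hu hv hw huv huw hvw
  rw [Finset.mem_coe, mem_S1] at hu hv hw
  have hwx : w ≠ xv n := by rintro rfl; rcases hw with ⟨i, -, h⟩ | ⟨j, h⟩ <;> simp at h
  have hwx' : w ≠ xv' n := by rintro rfl; rcases hw with ⟨i, -, h⟩ | ⟨j, h⟩ <;> simp at h
  rcases hu with ⟨i, hi, rfl⟩ | ⟨j, rfl⟩
  · rcases hv with ⟨i', hi', rfl⟩ | ⟨j', rfl⟩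
    · exact core_yy (by simpa using huv) (Ne.symm huw) (Ne.symm hvw)
    · exact core_yz hi hwx hwx' (Ne.symm huw) (Ne.symm hvw)
  · rcases hv with ⟨i', hi', rfl⟩ | ⟨j', rfl⟩
    · exact gp_swap (core_yz hi' hwx hwx' (Ne.symm hvw) (Ne.symm huw))
    · exact core_zz (by simpa using huv) hwx hwx' (Ne.symm huw) (Ne.symm hvw)

lemma gpH (hn : 3 ≤ n) : gpNum (Hgraph n) = 2*n + 1 :=
  gpNum_eq _ _ (S1 n) gpset_S1 (card_S1 (by omega)) (ubH hn)


lemma x'_nbrH {u} (h : (Hgraph n).Adj (xv' n) u) :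
    (∃ j : Fin n, u = zv j) ∨ ∃ i : Fin (2*n), (i:ℕ) = n ∧ u = yv i := by
  rcases u with i | b | m
  · exact Or.inr ⟨i, adj_x'y.1 h, rfl⟩
  · rcases b with _ | _ <;> simp [Hgraph] at h
  · exact Or.inl ⟨m, rfl⟩

end HG


namespace HX
open HG
variable {n : ℕ}

abbrev Vx (n : ℕ) := {v : Fin (2*n) ⊕ (Bool ⊕ Fin n) // v ≠ Sum.inr (Sum.inl false)}
abbrev Gx (n : ℕ) := delVert (Hgraph n) (Sum.inr (Sum.inl false))

def yx (i : Fin (2*n)) : Vx n := ⟨Sum.inl i, by simp⟩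
def xx' (n : ℕ) : Vx n := ⟨Sum.inr (Sum.inl true), by simp⟩
def zx (j : Fin n) : Vx n := ⟨Sum.inr (Sum.inr j), by simp⟩

lemma adjx {a b : Vx n} : (Gx n).Adj a b ↔ (Hgraph n).Adj a.1 b.1 := Iff.rfl

lemma yx_inj {i i' : Fin (2*n)} : yx i = yx i' ↔ i = i' := by
  simp [yx, Subtype.ext_iff]

lemma zx_inj {j j' : Fin n} : zx j = zx j' ↔ j = j' := by
  simp [zx, Subtype.ext_iff]

lemma adjx_yy {i i' : Fin (2*n)} : (Gx n).Adj (yx i) (yx i') ↔ i ≠ i' := adj_yy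

lemma adjx_zx' (j : Fin n) : (Gx n).Adj (zx j) (xx' n) := adj_zx' j

lemma adjx_x'y {i : Fin (2*n)} : (Gx n).Adj (xx' n) (yx i) ↔ (i:ℕ) = n := adj_x'y

lemma not_adjx_yz {i : Fin (2*n)} {j : Fin n} : ¬ (Gx n).Adj (yx i) (zx j) := not_adj_yz

lemma not_adjx_zz {j k : Fin n} : ¬ (Gx n).Adj (zx j) (zx k) := not_adj_zz

lemma zx_nbr {j : Fin n} {v : Vx n} (h : (Gx n).Adj (zx j) v) : v = xx' n := by
  rcases z_nbr (adjx.1 h) with h' | h'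
  · exact absurd h' v.2
  · exact Subtype.ext h'

lemma zx_nbr' {j : Fin n} {v : Vx n} (h : (Gx n).Adj v (zx j)) : v = xx' n := zx_nbr h.symm

lemma x'x_nbr {v : Vx n} (h : (Gx n).Adj (xx' n) v) :
    (∃ j : Fin n, v = zx j) ∨ ∃ i : Fin (2*n), (i:ℕ) = n ∧ v = yx i := by
  rcases x'_nbrH (adjx.1 h) with ⟨j, hj⟩ | ⟨i, hi, hv⟩
  · exact Or.inl ⟨j, Subtype.ext hj⟩
  · exact Or.inr ⟨i, hi, Subtype.ext hv⟩

lemma distx_zz {j j' : Fin n} (h : j ≠ j') : (Gx n).dist (zx j) (zx j') = 2 :=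
  dist_eq_two' (by simp [zx_inj, h]) not_adjx_zz (xx' n) (adjx_zx' j) (adjx_zx' j').symm

lemma distx_zy3 {j : Fin n} {i : Fin (2*n)} (hi : (i:ℕ) ≠ n) (hn : 0 < n) :
    (Gx n).dist (zx j) (yx i) = 3 := by
  have hnn : n < 2*n := by omega
  refine dist_eq_three' (by simp [zx, yx]) (not_adjx_yz.comp SimpleGraph.Adj.symm) ?_
    (Walk.cons (adjx_zx' j) (Walk.cons (adjx_x'y.2 (by simp : ((⟨n, hnn⟩ : Fin (2*n)):ℕ) = n))
      (Walk.cons (adjx_yy.2 (by simp [Fin.ext_iff]; omega)) Walk.nil))) (by simp)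
  intro m hm hmv
  rcases zx_nbr hm with rfl
  exact hi (adjx_x'y.1 hmv)

variable {S : Finset (Vx n)}

lemma violxZZ (hS : IsGPSet (Gx n) ↑S) {j j' : Fin n} (hjj : j ≠ j')
    (hj : zx j ∈ S) (hj' : zx j' ∈ S) : xx' n ∉ S := by
  intro hx
  exact hS (Finset.mem_coe.2 hj) (Finset.mem_coe.2 hj') (Finset.mem_coe.2 hx)
    (by simp [zx_inj, hjj]) (by simp [zx, xx']) (by simp [zx, xx'])
    (Walk.cons (adjx_zx' j) (Walk.cons (adjx_zx' j').symm Walk.nil))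
    (by rw [SimpleGraph.Walk.isPath_def]; simp only [Walk.support_cons, Walk.support_nil]; simp [zx, xx', Subtype.ext_iff, hjj])
    (by simp [distx_zz hjj]) (by simp)

lemma violxZY (hS : IsGPSet (Gx n) ↑S) {j : Fin n} {i : Fin (2*n)}
    (hjS : zx j ∈ S) (hi : (i:ℕ) ≠ n) (hiS : yx i ∈ S) (hn : 0 < n) :
    xx' n ∉ S ∧ (∀ k : Fin (2*n), (k:ℕ) = n → yx k ∉ S) := by
  have hnn : n < 2*n := by omega
  have hd := distx_zy3 (j := j) hi hn
  constructor
  · intro hx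
    exact hS (Finset.mem_coe.2 hjS) (Finset.mem_coe.2 hiS) (Finset.mem_coe.2 hx)
      (by simp [zx, yx]) (by simp [zx, xx']) (by simp [yx, xx'])
      (Walk.cons (adjx_zx' j) (Walk.cons (adjx_x'y.2 (by simp : ((⟨n, hnn⟩ : Fin (2*n)):ℕ) = n))
        (Walk.cons (adjx_yy.2 (by simp [Fin.ext_iff]; omega)) Walk.nil)))
      (by rw [SimpleGraph.Walk.isPath_def]
          simp only [Walk.support_cons, Walk.support_nil]
          simp [zx, yx, xx', Subtype.ext_iff, Fin.ext_iff]; omega)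
      (by simp [hd]) (by simp)
  · intro k hk hkS
    exact hS (Finset.mem_coe.2 hjS) (Finset.mem_coe.2 hiS) (Finset.mem_coe.2 hkS)
      (by simp [zx, yx]) (by simp [zx, yx]) (by simp [yx, Subtype.ext_iff, Fin.ext_iff]; omega)
      (Walk.cons (adjx_zx' j) (Walk.cons (adjx_x'y.2 hk)
        (Walk.cons (adjx_yy.2 (by simp [Fin.ext_iff]; omega)) Walk.nil)))
      (by rw [SimpleGraph.Walk.isPath_def]
          simp only [Walk.support_cons, Walk.support_nil]
          simp [zx, yx, xx', Subtype.ext_iff, Fin.ext_iff]; omega)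
      (by simp [hd]) (by simp)

/-- upper bound for `gp(H_n - x)` -/
lemma ubX (hn : 3 ≤ n) (S : Finset (Vx n)) (hS : IsGPSet (Gx n) ↑S) :
    S.card ≤ 3*n - 1 := by
  classical
  have hn0 : 0 < n := by omega
  have hnn : n < 2*n := by omega
  have cErase : ((Finset.univ.filter (fun i : Fin (2*n) => (i:ℕ) ≠ n)).card = 2*n - 1) := by
    have h : (Finset.univ.filter (fun i : Fin (2*n) => (i:ℕ) ≠ n)) =
        Finset.univ.erase ⟨n, hnn⟩ := by
      ext i; simp [Fin.ext_iff]
    rw [h, Finset.card_erase_of_mem (Finset.mem_univ _)]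
    simp
  have cZ : ((Finset.univ : Finset (Fin n)).image (fun j => zx j)).card ≤ n := by
    simpa using Finset.card_image_le (s := (Finset.univ : Finset (Fin n)))
      (f := fun j : Fin n => (zx j : Vx n))
  by_cases hM : ∃ (j : Fin n) (i : Fin (2*n)), zx j ∈ S ∧ (i:ℕ) ≠ n ∧ yx i ∈ S
  · obtain ⟨j, i, hj, hi, hy⟩ := hM
    obtain ⟨hx', hyn⟩ := violxZY hS hj hi hy hn0
    have hsub : S ⊆ (Finset.univ.image (fun j : Fin n => zx j)) ∪
        ((Finset.univ.filter (fun i : Fin (2*n) => (i:ℕ) ≠ n)).image (fun i => yx i)) := by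
      rintro ⟨val, hval⟩ hv
      rcases val with k | b | m
      · rcases eq_or_ne (k:ℕ) n with h | h
        · exact absurd (by simpa [yx] using hv) (hyn k h)
        · simp only [Finset.mem_union, Finset.mem_image, Finset.mem_filter]
          exact Or.inr ⟨k, by simp [h], by simp [yx]⟩
      · rcases b with _ | _
        · exact absurd rfl hval
        · exact absurd (by simpa [xx'] using hv) hx'
      · simp only [Finset.mem_union, Finset.mem_image]
        exact Or.inl ⟨m, by simp, by simp [zx]⟩
    have h1 := Finset.card_le_card hsub
    have h2 := Finset.card_union_le (Finset.univ.image (fun j : Fin n => (zx j : Vx n)))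
      ((Finset.univ.filter (fun i : Fin (2*n) => (i:ℕ) ≠ n)).image (fun i => (yx i : Vx n)))
    have h3 := Finset.card_image_le
      (s := (Finset.univ.filter (fun i : Fin (2*n) => (i:ℕ) ≠ n)))
      (f := fun i => (yx i : Vx n))
    omega
  · push_neg at hM
    by_cases hZ1 : ∃ j : Fin n, zx j ∈ S
    · obtain ⟨j0, hj0⟩ := hZ1
      have hsub : S ⊆ (Finset.univ.image (fun j : Fin n => zx j)) ∪
          ({xx' n, yx ⟨n, hnn⟩} : Finset (Vx n)) := by
        rintro ⟨val, hval⟩ hv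
        rcases val with k | b | m
        · rcases eq_or_ne (k:ℕ) n with h | h
          · have : k = (⟨n, hnn⟩ : Fin (2*n)) := by simp [Fin.ext_iff, h]
            subst this
            simp [yx]
          · exact absurd (by simpa [yx] using hv) (hM j0 k hj0 h)
        · rcases b with _ | _
          · exact absurd rfl hval
          · simp [xx']
        · simp only [Finset.mem_union, Finset.mem_image]
          exact Or.inl ⟨m, by simp, by simp [zx]⟩
      have h1 := Finset.card_le_card hsub
      have h2 := Finset.card_union_le (Finset.univ.image (fun j : Fin n => (zx j : Vx n)))
        ({xx' n, yx ⟨n, hnn⟩} : Finset (Vx n))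
      have h3 : ({xx' n, yx ⟨n, hnn⟩} : Finset (Vx n)).card ≤ 2 :=
        (Finset.card_insert_le _ _).trans (by simp)
      omega
    · push_neg at hZ1
      have hsub : S ⊆ ({xx' n} : Finset (Vx n)) ∪
          (Finset.univ.image (fun i : Fin (2*n) => yx i)) := by
        rintro ⟨val, hval⟩ hv
        rcases val with k | b | m
        · simp only [Finset.mem_union, Finset.mem_image]
          exact Or.inr ⟨k, by simp, by simp [yx]⟩
        · rcases b with _ | _
          · exact absurd rfl hval
          · simp [xx']
        · exact absurd (by simpa [zx] using hv) (hZ1 m)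
      have h1 := Finset.card_le_card hsub
      have h2 := Finset.card_union_le ({xx' n} : Finset (Vx n))
        (Finset.univ.image (fun i : Fin (2*n) => (yx i : Vx n)))
      have h3 := Finset.card_image_le (s := (Finset.univ : Finset (Fin (2*n))))
        (f := fun i : Fin (2*n) => (yx i : Vx n))
      simp only [Finset.card_univ, Fintype.card_fin, Finset.card_singleton] at h3 h2 ⊢
      omega


def S2 (n : ℕ) : Finset (Vx n) :=
  ((Finset.univ.filter (fun i : Fin (2*n) => (i:ℕ) ≠ n)).image (fun i => yx i)) ∪
    (Finset.univ.image (fun j : Fin n => zx j))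

lemma mem_S2 {v : Vx n} : v ∈ S2 n ↔
    (∃ i : Fin (2*n), (i:ℕ) ≠ n ∧ v = yx i) ∨ ∃ j : Fin n, v = zx j := by
  simp [S2, eq_comm]

lemma card_S2 (hn : 0 < n) : (S2 n).card = 3*n - 1 := by
  have hnn : n < 2*n := by omega
  have cErase : ((Finset.univ.filter (fun i : Fin (2*n) => (i:ℕ) ≠ n)).card = 2*n - 1) := by
    have h : (Finset.univ.filter (fun i : Fin (2*n) => (i:ℕ) ≠ n)) =
        Finset.univ.erase ⟨n, hnn⟩ := by
      ext i; simp [Fin.ext_iff]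
    rw [h, Finset.card_erase_of_mem (Finset.mem_univ _)]
    simp
  rw [S2, Finset.card_union_of_disjoint,
    Finset.card_image_of_injective _ (fun a b h => yx_inj.1 h),
    Finset.card_image_of_injective _ (fun a b h => zx_inj.1 h),
    cErase, Finset.card_univ, Fintype.card_fin]
  · omega
  · rw [Finset.disjoint_left]
    rintro a ha hb
    simp only [Finset.mem_image] at ha hb
    obtain ⟨i, -, rfl⟩ := ha
    obtain ⟨j, -, h⟩ := hb
    exact absurd h (by simp [yx, zx, Subtype.ext_iff])

lemma corex_yy {i i' : Fin (2*n)} {w : Vx n} (hne : i ≠ i')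
    (hw1 : w ≠ yx i) (hw2 : w ≠ yx i') :
    ∀ p : (Gx n).Walk (yx i) (yx i'), p.IsPath →
      p.length = (Gx n).dist (yx i) (yx i') → w ∉ p.support := by
  intro p hp hl hw
  have hd : (Gx n).dist (yx i) (yx i') = 1 := dist_eq_one_iff_adj.2 (adjx_yy.2 hne)
  rw [hd] at hl
  obtain ⟨-, hs⟩ := walk_len1_support p hl
  rw [hs] at hw
  simp only [List.mem_cons, List.not_mem_nil, or_false, List.mem_singleton] at hw
  tauto

lemma corex_zz {j j' : Fin n} {w : Vx n} (hne : j ≠ j')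
    (hw1 : w ≠ xx' n) (hw3 : w ≠ zx j) (hw4 : w ≠ zx j') :
    ∀ p : (Gx n).Walk (zx j) (zx j'), p.IsPath →
      p.length = (Gx n).dist (zx j) (zx j') → w ∉ p.support := by
  intro p hp hl hw
  rw [distx_zz hne] at hl
  obtain ⟨m, h1, h2, hs⟩ := walk_len2_support p hl
  rw [hs] at hw
  simp only [List.mem_cons, List.not_mem_nil, or_false, List.mem_singleton] at hw
  rcases hw with rfl | rfl | rfl
  · exact hw3 rfl
  · exact hw1 (zx_nbr h1)
  · exact hw4 rfl

lemma corex_zy {j : Fin n} {i : Fin (2*n)} {w : Vx n} (hi : (i:ℕ) ≠ n)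
    (hw1 : w ≠ xx' n) (hw2 : ∀ k : Fin (2*n), (k:ℕ) = n → w ≠ yx k)
    (hw3 : w ≠ zx j) (hw4 : w ≠ yx i) :
    ∀ p : (Gx n).Walk (zx j) (yx i), p.IsPath →
      p.length = (Gx n).dist (zx j) (yx i) → w ∉ p.support := by
  intro p hp hl hw
  rw [distx_zy3 hi j.pos] at hl
  obtain ⟨m, m', h1, h2, h3, hs⟩ := walk_len3_support p hl
  rcases zx_nbr h1 with rfl
  rcases x'x_nbr h2 with ⟨k, rfl⟩ | ⟨k, hk, rfl⟩
  · exact absurd (zx_nbr h3) (by simp [yx, xx', Subtype.ext_iff])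
  · rw [hs] at hw
    simp only [List.mem_cons, List.not_mem_nil, or_false, List.mem_singleton] at hw
    rcases hw with rfl | rfl | rfl | rfl
    · exact hw3 rfl
    · exact hw1 rfl
    · exact hw2 k hk rfl
    · exact hw4 rfl

lemma gpset_S2 : IsGPSet (Gx n) ↑(S2 n) := by
  intro u v w hu hv hw huv huw hvw
  rw [Finset.mem_coe, mem_S2] at hu hv hw
  have hwx : w ≠ xx' n := by
    rintro rfl
    rcases hw with ⟨i, -, h⟩ | ⟨j, h⟩ <;>
      simp [yx, zx, xx', Subtype.ext_iff] at h
  have hwn : ∀ k : Fin (2*n), (k:ℕ) = n → w ≠ yx k := by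
    rintro k hk rfl
    rcases hw with ⟨i, hi, h⟩ | ⟨j, h⟩
    · rw [yx_inj] at h
      subst h
      exact hi hk
    · simp [yx, zx, Subtype.ext_iff] at h
  rcases hu with ⟨i, hi, rfl⟩ | ⟨j, rfl⟩
  · rcases hv with ⟨i', hi', rfl⟩ | ⟨j', rfl⟩
    · exact corex_yy (fun h => huv (by rw [h])) (Ne.symm huw) (Ne.symm hvw)
    · exact gp_swap (corex_zy hi hwx hwn (Ne.symm hvw) (Ne.symm huw))
  · rcases hv with ⟨i', hi', rfl⟩ | ⟨j', rfl⟩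
    · exact corex_zy hi' hwx hwn (Ne.symm huw) (Ne.symm hvw)
    · exact corex_zz (fun h => huv (by rw [h])) hwx (Ne.symm huw) (Ne.symm hvw)

lemma gpX (hn : 3 ≤ n) : gpNum (Gx n) = 3*n - 1 :=
  gpNum_eq _ _ (S2 n) gpset_S2 (card_S2 (by omega)) (ubX hn)

end HX


/-- For `n ≥ 3`, `gp(H_n) = 2n + 1` and `gp(H_n - x) = 3n - 1`. -/
theorem stmt_4 (n : ℕ) (hn : 3 ≤ n) :
    gpNum (Hgraph n) = 2 * n + 1 ∧
    gpNum (delVert (Hgraph n) (Sum.inr (Sum.inl false))) = 3 * n - 1 :=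
  ⟨HG.gpH hn, HX.gpX hn⟩
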